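/- Let f : ℂ → ℂ be analytic on a neighborhood of p, and suppose f'(w) = (w − p)^m · u(w) near p, where m ≥ 1 is a natural number and u is analytic at p with u(p) ≠ 0. Then the Schwarzian derivative S f is analytic on a punctured neighborhood of p, and (w − p)²·S f(w) tends to −m·(m+2)/2 as w → p through w ≠ p. In particular (since −m·(m+2)/2 ≠ 0), S f has a pole of order exactly 2 at p. -/

import Mathlib

open Filter

/-- The Schwarzian derivative `S f (z) = f'''(z)/f'(z) − (3/2)·(f''(z)/f'(z))²`. -/
noncomputable def schwarzian (f : ℂ → ℂ) (z : ℂ) : ℂ :=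
  deriv (deriv (deriv f)) z / deriv f z - (3 / 2) * (deriv (deriv f) z / deriv f z) ^ 2

private lemma analyticAt_deriv' {f : ℂ → ℂ} {x : ℂ} (h : AnalyticAt ℂ f x) :
    AnalyticAt ℂ (deriv f) x := by
  obtain ⟨s, hs, hos⟩ := h.exists_mem_nhds_analyticOnNhd
  exact hos.deriv x (mem_of_mem_nhds hs)

private lemma schwarzian_alg (t a b c : ℂ) (k : ℕ) (ht : t ≠ 0) (hc : c ≠ 0) :
    t ^ 2 * (((k : ℂ) * t ^ (k - 1) * a + t ^ k * b) / (t ^ (k + 1) * c)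
      - 3 / 2 * ((t ^ k * a) / (t ^ (k + 1) * c)) ^ 2)
    = (k : ℂ) * (a / c) + t * (b / c) - 3 / 2 * (a / c) ^ 2 := by
  rcases k with _ | n
  · simp only [pow_zero, pow_one, Nat.cast_zero, zero_mul, zero_add, one_mul]
    field_simp
  · have hn : (n + 1 : ℕ) - 1 = n := rfl
    rw [hn]
    simp only [pow_succ]
    have h1 : t ^ n ≠ 0 := pow_ne_zero _ ht
    generalize t ^ n = s at h1 ⊢
    have ht4 : t ^ 4 * t⁻¹ ^ 4 = 1 := by rw [← mul_pow, mul_inv_cancel₀ ht, one_pow]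
    have hs2 : s ^ 2 * s⁻¹ ^ 2 = 1 := by rw [← mul_pow, mul_inv_cancel₀ h1, one_pow]
    have hc2 : c ^ 2 * c⁻¹ ^ 2 = 1 := by rw [← mul_pow, mul_inv_cancel₀ hc, one_pow]
    field_simp

/-- Paper's Proposition `Pol(S_z f) = −2·Supp Ram(f)`: at a ramification point of
order `m` of `f`, the Schwarzian `S f` is analytic on a punctured neighborhood and
`(w − p)²·S f(w) → −m·(m+2)/2 ≠ 0`, i.e. `S f` has a pole of order exactly 2. -/
theorem schwarzian_double_pole_at_ramification
    (f u : ℂ → ℂ) (p : ℂ) (m : ℕ) (hm : 1 ≤ m)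
    (hf : AnalyticAt ℂ f p) (hu : AnalyticAt ℂ u p) (hup : u p ≠ 0)
    (hfac : ∀ᶠ w in nhds p, deriv f w = (w - p) ^ m * u w) :
    (∀ᶠ w in nhdsWithin p {p}ᶜ, AnalyticAt ℂ (schwarzian f) w) ∧
    Tendsto (fun w => (w - p) ^ 2 * schwarzian f w) (nhdsWithin p {p}ᶜ)
      (nhds (-((m : ℂ) * ((m : ℂ) + 2)) / 2)) := by
  obtain ⟨k, rfl⟩ : ∃ k, m = k + 1 := ⟨m - 1, (Nat.succ_pred_eq_of_pos hm).symm⟩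
  set u1 : ℂ → ℂ := fun w => ((k : ℂ) + 1) * u w + (w - p) * deriv u w with hu1def
  have hA : ∀ᶠ w in nhds p, AnalyticAt ℂ u w := hu.eventually_analyticAt
  have hU : ∀ᶠ w in nhds p, u w ≠ 0 := hu.continuousAt.eventually_ne hup
  have hu1A : ∀ w, AnalyticAt ℂ u w → AnalyticAt ℂ u1 w := by
    intro w hw
    exact (analyticAt_const.mul hw).add
      ((analyticAt_id.sub analyticAt_const).mul (analyticAt_deriv' hw))
  have h2 : deriv (deriv f) =ᶠ[nhds p] fun w => (w - p) ^ k * u1 w := by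
    have hE : deriv f =ᶠ[nhds p] fun w => (w - p) ^ (k + 1) * u w := hfac
    refine (hE.deriv).trans ?_
    filter_upwards [hA] with w hw
    have hpow : HasDerivAt (fun w => (w - p) ^ (k + 1))
        (((k : ℂ) + 1) * (w - p) ^ k) w := by
      have := ((hasDerivAt_id w).sub_const p).pow (k + 1)
      simpa [Nat.add_sub_cancel, Pi.pow_def] using this
    have := (hpow.mul hw.differentiableAt.hasDerivAt).deriv
    simp only [Pi.mul_def] at this; rw [this]; simp only [hu1def]; ring
  have h3 : deriv (deriv (deriv f)) =ᶠ[nhds p]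
      fun w => (k : ℂ) * (w - p) ^ (k - 1) * u1 w + (w - p) ^ k * deriv u1 w := by
    refine (h2.deriv).trans ?_
    filter_upwards [hA] with w hw
    have hu1w : AnalyticAt ℂ u1 w := hu1A w hw
    have hpow : HasDerivAt (fun w => (w - p) ^ k)
        ((k : ℂ) * (w - p) ^ (k - 1)) w := by
      have := ((hasDerivAt_id w).sub_const p).pow k
      simpa [Pi.pow_def] using this
    exact (hpow.mul hu1w.differentiableAt.hasDerivAt).deriv
  constructor
  · have hfac' : ∀ᶠ w in nhds p,
        deriv f =ᶠ[nhds w] fun w => (w - p) ^ (k + 1) * u w :=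
      (hfac : deriv f =ᶠ[nhds p] _).eventually_nhds
    have key : ∀ᶠ w in nhds p, w ≠ p → AnalyticAt ℂ (schwarzian f) w := by
      filter_upwards [hfac', hA.eventually_nhds, hU] with w hEw hAw hUw hwp
      have hAw' : AnalyticAt ℂ u w := hAw.self_of_nhds
      have hg : AnalyticAt ℂ (fun w => (w - p) ^ (k + 1) * u w) w :=
        ((analyticAt_id.sub analyticAt_const).pow (k + 1)).mul hAw'
      have hd1 : AnalyticAt ℂ (deriv f) w := hg.congr hEw.symm
      have hne : deriv f w ≠ 0 := by
        rw [hEw.self_of_nhds]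
        exact mul_ne_zero (pow_ne_zero _ (sub_ne_zero.mpr hwp)) hUw
      have hd2 : AnalyticAt ℂ (deriv (deriv f)) w := analyticAt_deriv' hd1
      have hd3 : AnalyticAt ℂ (deriv (deriv (deriv f))) w := analyticAt_deriv' hd2
      exact (hd3.div hd1 hne).sub (analyticAt_const.mul ((hd2.div hd1 hne).pow 2))
    rw [eventually_nhdsWithin_iff]
    filter_upwards [key] with w hw hw'
    exact hw hw'
  · have hu1p : AnalyticAt ℂ u1 p := hu1A p hu
    set F : ℂ → ℂ := fun w =>
      (k : ℂ) * (u1 w / u w) + (w - p) * (deriv u1 w / u w)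
        - 3 / 2 * (u1 w / u w) ^ 2 with hF
    have hFc : ContinuousAt F p := by
      have h1 : ContinuousAt u1 p := hu1p.continuousAt
      have h2' : ContinuousAt (deriv u1) p := (analyticAt_deriv' hu1p).continuousAt
      have h3' : ContinuousAt u p := hu.continuousAt
      exact ((continuousAt_const.mul (h1.div h3' hup)).add
        ((continuousAt_id.sub continuousAt_const).mul (h2'.div h3' hup))).sub
        (continuousAt_const.mul ((h1.div h3' hup).pow 2))
    have hu1pv : u1 p = ((k : ℂ) + 1) * u p := by simp [hu1def]
    have hFp : F p = -(((k : ℂ) + 1) * (((k : ℂ) + 1) + 2)) / 2 := by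
      simp only [hF, hu1pv, sub_self, zero_mul, add_zero, mul_div_assoc,
        div_self hup]
      ring
    have heq : ∀ᶠ w in nhdsWithin p {p}ᶜ,
        (w - p) ^ 2 * schwarzian f w = F w := by
      rw [eventually_nhdsWithin_iff]
      filter_upwards [hfac, h2, h3, hU] with w e1 e2 e3 e4 hw'
      have ht : w - p ≠ 0 := sub_ne_zero.mpr hw'
      rw [schwarzian, e1, e2, e3, hF]
      exact schwarzian_alg (w - p) (u1 w) (deriv u1 w) (u w) k ht e4
    have hT : Tendsto F (nhdsWithin p {p}ᶜ) (nhds (F p)) :=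
      hFc.continuousWithinAt.tendsto
    rw [hFp] at hT
    have := hT.congr' (heq.mono fun w h => h.symm)
    convert this using 2
    push_cast
    ring
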